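/- Let G be an n×m real matrix with GᵀG ≤ n c_max I_m (in the positive semidefinite order) for some c_max > 0, let σ² > 0, and let Λ = diag(λ₁, …, λ_m) with 0 ≤ λᵢ ≤ L for all i. Then log det( Iₙ + σ⁻² G Λ Gᵀ ) ≤ m · log( 1 + n σ⁻² c_max L ). -/

import Mathlib

open Matrix

private lemma psd_smul_aux {m : ℕ} {A : Matrix (Fin m) (Fin m) ℝ} (hA : A.PosSemidef)
    {c : ℝ} (hc : 0 ≤ c) : (c • A).PosSemidef := by
  refine Matrix.PosSemidef.of_dotProduct_mulVec_nonneg ?_ (fun x => ?_)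
  · unfold Matrix.IsHermitian
    rw [conjTranspose_smul, hA.1.eq]
    simp
  · rw [smul_mulVec, dotProduct_smul, smul_eq_mul]
    exact mul_nonneg hc (hA.dotProduct_mulVec_nonneg x)

private lemma eig_le_of_sub_psd {m : ℕ} {A : Matrix (Fin m) (Fin m) ℝ} (hA : A.IsHermitian)
    {c : ℝ} (h : (c • (1 : Matrix (Fin m) (Fin m) ℝ) - A).PosSemidef) (i : Fin m) :
    hA.eigenvalues i ≤ c := by
  have hv := h.dotProduct_mulVec_nonneg ⇑(hA.eigenvectorBasis i)
  have heq := hA.eigenvalues_eq i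
  simp only [RCLike.re_to_real] at heq
  have hnorm : dotProduct (star ⇑(hA.eigenvectorBasis i)) ⇑(hA.eigenvectorBasis i)
      = 1 := by
    have h1 : (inner ℝ (hA.eigenvectorBasis i) (hA.eigenvectorBasis i) : ℝ) = 1 := by
      rw [real_inner_self_eq_norm_sq, hA.eigenvectorBasis.orthonormal.1 i]
      norm_num
    exact h1
  rw [sub_mulVec, smul_mulVec, one_mulVec, dotProduct_sub, dotProduct_smul, hnorm,
    ← heq] at hv
  simp only [smul_eq_mul, mul_one] at hv
  linarith

/-- If `GᵀG ≤ n c_max I` and `0 ≤ λᵢ ≤ L`, then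
`log det(I + σ⁻²GΛGᵀ) ≤ m log(1 + nσ⁻²c_max L)`. -/
theorem stmt_19 (n m : ℕ) (G : Matrix (Fin n) (Fin m) ℝ) (cmax : ℝ) (hc : 0 < cmax)
    (hG : (((n : ℝ) * cmax) • (1 : Matrix (Fin m) (Fin m) ℝ) - Gᵀ * G).PosSemidef)
    (σ2 : ℝ) (hσ2 : 0 < σ2) (lam : Fin m → ℝ) (L : ℝ)
    (hlam : ∀ i, 0 ≤ lam i ∧ lam i ≤ L) :
    Real.log ((1 + σ2⁻¹ • (G * Matrix.diagonal lam * Gᵀ)).det) ≤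
      m * Real.log (1 + n * σ2⁻¹ * cmax * L) := by
  set D : Matrix (Fin m) (Fin m) ℝ := Matrix.diagonal (fun i => Real.sqrt (lam i)) with hD
  set B : Matrix (Fin n) (Fin m) ℝ := G * D with hB
  set c : ℝ := n * σ2⁻¹ * cmax * L with hcdef
  -- rewrite the n×n determinant as an m×m determinant
  have hdiag : Matrix.diagonal lam = D * D := by
    rw [hD, diagonal_mul_diagonal]
    exact congrArg Matrix.diagonal (funext fun i => (Real.mul_self_sqrt (hlam i).1).symm)
  have hBT : Bᵀ = D * Gᵀ := by
    rw [hB, transpose_mul, hD, diagonal_transpose]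
  have hdet : (1 + σ2⁻¹ • (G * Matrix.diagonal lam * Gᵀ)).det
      = (1 + σ2⁻¹ • (Bᵀ * B)).det := by
    have h1 : G * Matrix.diagonal lam * Gᵀ = B * Bᵀ := by
      rw [hdiag, hBT, hB, Matrix.mul_assoc, Matrix.mul_assoc, Matrix.mul_assoc]
    rw [h1]
    have h2 : (1 : Matrix (Fin n) (Fin n) ℝ) + σ2⁻¹ • (B * Bᵀ)
        = 1 + B * (σ2⁻¹ • Bᵀ) := by rw [Matrix.mul_smul]
    have h3 : (1 : Matrix (Fin m) (Fin m) ℝ) + (σ2⁻¹ • Bᵀ) * B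
        = 1 + σ2⁻¹ • (Bᵀ * B) := by rw [Matrix.smul_mul]
    rw [h2, det_one_add_mul_comm, h3]
  rw [hdet]
  set H : Matrix (Fin m) (Fin m) ℝ := σ2⁻¹ • (Bᵀ * B) with hH
  -- H is positive semidefinite
  have hBTB : (Bᵀ * B).PosSemidef := by
    have := Matrix.posSemidef_conjTranspose_mul_self B
    simpa using this
  have hHpsd : H.PosSemidef := psd_smul_aux hBTB (le_of_lt (inv_pos.mpr hσ2))
  -- the key upper bound: c • 1 - H is positive semidefinite
  have hub : (c • (1 : Matrix (Fin m) (Fin m) ℝ) - H).PosSemidef := by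
    refine Matrix.PosSemidef.of_dotProduct_mulVec_nonneg ?_ (fun x => ?_)
    · unfold Matrix.IsHermitian
      rw [conjTranspose_sub, conjTranspose_smul, conjTranspose_one, hHpsd.1.eq]
      simp
    · -- quadratic form computation
      have hxH : dotProduct (star x) (H *ᵥ x)
          = σ2⁻¹ * dotProduct (B *ᵥ x) (B *ᵥ x) := by
        rw [hH, smul_mulVec, dotProduct_smul, smul_eq_mul]
        congr 1
        rw [← mulVec_mulVec, dotProduct_mulVec, vecMul_transpose]
        simp
      set z : Fin m → ℝ := D *ᵥ x with hz
      have hBx : B *ᵥ x = G *ᵥ z := by rw [hB, ← mulVec_mulVec]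
      have hzz : dotProduct z z ≤ L * dotProduct x x := by
        rw [dotProduct, dotProduct, Finset.mul_sum]
        apply Finset.sum_le_sum
        intro i _
        rw [hz, hD, mulVec_diagonal]
        have h1 : Real.sqrt (lam i) * x i * (Real.sqrt (lam i) * x i)
            = lam i * (x i * x i) := by
          rw [mul_mul_mul_comm, Real.mul_self_sqrt (hlam i).1]
        rw [h1]
        exact mul_le_mul_of_nonneg_right (hlam i).2 (mul_self_nonneg _)
      have hGz : dotProduct (G *ᵥ z) (G *ᵥ z)
          ≤ (n * cmax) * dotProduct z z := by
        have h0 := hG.dotProduct_mulVec_nonneg z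
        rw [sub_mulVec, smul_mulVec, one_mulVec, dotProduct_sub,
          dotProduct_smul, smul_eq_mul] at h0
        have h1 : dotProduct (star z) ((Gᵀ * G) *ᵥ z)
            = dotProduct (G *ᵥ z) (G *ᵥ z) := by
          rw [← mulVec_mulVec, dotProduct_mulVec, vecMul_transpose]
          simp
        have h2 : dotProduct (star z) z = dotProduct z z := by simp
        rw [h1, h2] at h0
        linarith
      have hzznn : 0 ≤ dotProduct z z := by
        apply Finset.sum_nonneg; intro i _; exact mul_self_nonneg _
      have hxx : 0 ≤ dotProduct x x := by
        apply Finset.sum_nonneg; intro i _; exact mul_self_nonneg _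
      have hncmax : (0:ℝ) ≤ n * cmax := mul_nonneg (Nat.cast_nonneg n) hc.le
      have hGzL : dotProduct (G *ᵥ z) (G *ᵥ z)
          ≤ (n * cmax) * (L * dotProduct x x) :=
        hGz.trans (mul_le_mul_of_nonneg_left hzz hncmax)
      rw [sub_mulVec, smul_mulVec, one_mulVec, dotProduct_sub,
        dotProduct_smul, smul_eq_mul, hxH, hBx]
      have h2 : dotProduct (star x) x = dotProduct x x := by simp
      rw [h2, hcdef]
      have hσinv : 0 ≤ σ2⁻¹ := (inv_pos.mpr hσ2).le
      nlinarith [mul_le_mul_of_nonneg_left hGzL hσinv]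
  -- now pass to eigenvalues of M := 1 + H
  set M : Matrix (Fin m) (Fin m) ℝ := 1 + H with hM
  have hMpd : M.PosDef := by
    refine Matrix.PosDef.add_posSemidef ?_ hHpsd
    exact Matrix.posDef_iff_dotProduct_mulVec.mpr ⟨Matrix.isHermitian_one, fun x hx => by
      rw [one_mulVec]
      exact dotProduct_star_self_pos_iff.mpr hx⟩
  have hMh : M.IsHermitian := hMpd.isHermitian
  have hMub : ((1 + c) • (1 : Matrix (Fin m) (Fin m) ℝ) - M).PosSemidef := by
    have : (1 + c) • (1 : Matrix (Fin m) (Fin m) ℝ) - M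
        = c • (1 : Matrix (Fin m) (Fin m) ℝ) - H := by
      rw [hM, add_smul, one_smul]
      abel
    rw [this]; exact hub
  have heig_ub : ∀ i, hMh.eigenvalues i ≤ 1 + c := fun i => eig_le_of_sub_psd hMh hMub i
  have heig_nn : ∀ i, 0 ≤ hMh.eigenvalues i := fun i => hMpd.posSemidef.eigenvalues_nonneg i
  have hdetM : M.det = ∏ i, hMh.eigenvalues i := hMh.det_eq_prod_eigenvalues
  have hdet_le : M.det ≤ (1 + c) ^ m := by
    rw [hdetM]
    calc ∏ i, hMh.eigenvalues i ≤ ∏ _i : Fin m, (1 + c) :=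
          Finset.prod_le_prod (fun i _ => heig_nn i) (fun i _ => heig_ub i)
      _ = (1 + c) ^ m := by simp
  have hdetpos : 0 < M.det := hMpd.det_pos
  calc Real.log M.det ≤ Real.log ((1 + c) ^ m) := Real.log_le_log hdetpos hdet_le
    _ = m * Real.log (1 + c) := by rw [Real.log_pow]
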